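/- Fix ρ > 0 and q ∈ ℕ. For τ ∈ ℝ let w_τ(x) = e^{−ρτ(x+1)} and let (ω^{(τ)}, r^{(τ)}) be the w_τ-Gauß–Radau quadrature of order q on (−1,1]. Let χ_τ be the polynomial of degree ≤ q+1 with χ_τ(r^{(τ)}_j) = 0 for all j ∈ {0,…,q} and χ_τ(−1) = 1. Then for every compact set K ⊂ ℝ: sup_{τ ∈ K} ∫_{−1}^1 χ_τ(x)² w_τ(x) dx < ∞. -/

import Mathlib

open MeasureTheory Real

section Stmt17Aux

open Polynomial

private lemma intOn17 {f : ℝ → ℝ} (hf : Continuous f) : IntegrableOn f (Set.Ioo (-1:ℝ) 1) :=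
  (hf.integrableOn_Icc (a := (-1:ℝ)) (b := 1)).mono_set Set.Ioo_subset_Icc_self

private lemma int_const17 (c : ℝ) : ∫ _x in Set.Ioo (-1:ℝ) 1, c = 2 * c := by
  rw [setIntegral_const, Real.volume_real_Ioo]
  rw [show (1:ℝ) - (-1) = 2 by norm_num, max_eq_left (by norm_num : (0:ℝ) ≤ 2)]
  simp [mul_comm]

private lemma chi_eq17 {q : ℕ} {s : Fin (q+1) → ℝ} (hinj : Function.Injective s)
    {χ : Polynomial ℝ}
    (hdeg : χ.natDegree ≤ q + 1) (h0 : ∀ j, χ.eval (s j) = 0) (h1 : χ.eval (-1) = 1)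
    (x : ℝ) : (χ.eval x)^2 * ∏ j, (-1 - s j)^2 = ∏ j, (x - s j)^2 := by
  have hχ0 : χ ≠ 0 := fun h => by simp [h] at h1
  set P : Polynomial ℝ := ∏ j, (X - C (s j)) with hP
  have hdvd : P ∣ χ := by
    apply Finset.prod_dvd_of_coprime
    · intro a _ b hb hab
      exact Polynomial.pairwise_coprime_X_sub_C hinj hab
    · intro j _
      exact Polynomial.dvd_iff_isRoot.2 (h0 j)
  obtain ⟨u, hu⟩ := hdvd
  have hPmonic : P.Monic := monic_prod_of_monic _ _ fun j _ => monic_X_sub_C _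
  have hPdeg : P.natDegree = q + 1 := by
    rw [hP, Polynomial.natDegree_prod]
    · simp
    · intro j _; exact X_sub_C_ne_zero _
  have hu0 : u ≠ 0 := by rintro rfl; rw [mul_zero] at hu; exact hχ0 hu
  have hudeg : u.natDegree = 0 := by
    have h2 : χ.natDegree = P.natDegree + u.natDegree := by
      rw [hu]; exact Polynomial.natDegree_mul hPmonic.ne_zero hu0
    omega
  obtain ⟨c, rfl⟩ := Polynomial.natDegree_eq_zero.mp hudeg
  have hevalx : ∀ y : ℝ, χ.eval y = (∏ j, (y - s j)) * c := by
    intro y; rw [hu]; simp [hP, eval_prod]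
  have h1' : (∏ j, (-1 - s j)) * c = 1 := by rw [← hevalx]; exact h1
  have e1 : ∏ j, (-1 - s j)^2 = (∏ j, (-1 - s j))^2 := by rw [Finset.prod_pow]
  have e2 : ∏ j, (x - s j)^2 = (∏ j, (x - s j))^2 := by rw [Finset.prod_pow]
  rw [e1, e2, hevalx x]
  calc ((∏ j, (x - s j)) * c)^2 * (∏ j, (-1 - s j))^2
      = (∏ j, (x - s j))^2 * ((∏ j, (-1 - s j)) * c)^2 := by ring
    _ = (∏ j, (x - s j))^2 := by rw [h1']; ring

private lemma contF17 {m : ℕ} (T : Finset (Fin m)) :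
    Continuous fun s : Fin m → ℝ =>
      ∫ x in Set.Ioo (-1:ℝ) 1, (1 - x^2) * ∏ j ∈ T, (x - s j)^2 := by
  rw [continuous_iff_continuousAt]
  intro s₀
  apply continuousAt_of_dominated (bound := fun _ => ∏ j ∈ T, (|s₀ j| + 2)^2)
  · filter_upwards with s
    exact (Continuous.aestronglyMeasurable (by fun_prop))
  · filter_upwards [Metric.ball_mem_nhds s₀ one_pos] with s hs
    rw [ae_restrict_iff' measurableSet_Ioo]
    filter_upwards with x hx
    have hx1 : |x| ≤ 1 := le_of_lt (abs_lt.mpr ⟨hx.1, hx.2⟩)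
    have h1 : |1 - x^2| ≤ 1 := by
      rw [abs_le]; constructor <;> nlinarith [abs_nonneg x, abs_le.mp hx1]
    have h2 : |∏ j ∈ T, (x - s j)^2| ≤ ∏ j ∈ T, (|s₀ j| + 2)^2 := by
      rw [abs_of_nonneg (Finset.prod_nonneg fun j _ => sq_nonneg _)]
      apply Finset.prod_le_prod (fun j _ => sq_nonneg _)
      intro j _
      have hdj : |s j - s₀ j| ≤ 1 := by
        have := dist_le_pi_dist s s₀ j
        rw [Real.dist_eq] at this
        exact this.trans (le_of_lt (by simpa [Metric.mem_ball] using hs))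
      have habs : |x - s j| ≤ |s₀ j| + 2 := by
        have h3 : |s j| ≤ |s₀ j| + 1 := by
          calc |s j| = |s₀ j + (s j - s₀ j)| := by ring_nf
            _ ≤ |s₀ j| + |s j - s₀ j| := abs_add_le _ _
            _ ≤ |s₀ j| + 1 := by linarith
        calc |x - s j| ≤ |x| + |s j| := abs_sub _ _
          _ ≤ |s₀ j| + 2 := by linarith
      calc (x - s j)^2 = |x - s j|^2 := (sq_abs _).symm
        _ ≤ (|s₀ j| + 2)^2 := pow_le_pow_left₀ (abs_nonneg _) habs 2
    calc ‖(1 - x^2) * ∏ j ∈ T, (x - s j)^2‖ = |1 - x^2| * |∏ j ∈ T, (x - s j)^2| := abs_mul _ _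
      _ ≤ 1 * ∏ j ∈ T, (|s₀ j| + 2)^2 := by
          apply mul_le_mul h1 h2 (abs_nonneg _) zero_le_one
      _ = _ := one_mul _
  · exact (intOn17 (by fun_prop))
  · filter_upwards with x
    exact ((continuous_const.mul (continuous_finset_prod T fun j _ =>
      (continuous_const.sub (continuous_apply j)).pow 2))).continuousAt

private lemma posF17 {m : ℕ} (T : Finset (Fin m)) (s : Fin m → ℝ) :
    0 < ∫ x in Set.Ioo (-1:ℝ) 1, (1 - x^2) * ∏ j ∈ T, (x - s j)^2 := by
  set f : ℝ → ℝ := fun x => (1 - x^2) * ∏ j ∈ T, (x - s j)^2 with hf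
  have hnn : 0 ≤ᵐ[volume.restrict (Set.Ioo (-1:ℝ) 1)] f := by
    rw [Filter.EventuallyLE, ae_restrict_iff' measurableSet_Ioo]
    filter_upwards with x hx
    have h1 : (0:ℝ) ≤ 1 - x^2 := by nlinarith [hx.1, hx.2]
    have h2 : (0:ℝ) ≤ ∏ j ∈ T, (x - s j)^2 := Finset.prod_nonneg fun j _ => sq_nonneg _
    exact mul_nonneg h1 h2
  rw [setIntegral_pos_iff_support_of_nonneg_ae hnn (intOn17 (by fun_prop))]
  have hsub : Set.Ioo (-1:ℝ) 1 \ (↑(T.image s) : Set ℝ)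
      ⊆ Function.support f ∩ Set.Ioo (-1:ℝ) 1 := by
    rintro x ⟨hx, hxn⟩
    refine ⟨?_, hx⟩
    have h1 : 1 - x^2 ≠ 0 := by nlinarith [hx.1, hx.2]
    have h2 : ∏ j ∈ T, (x - s j)^2 ≠ 0 := by
      rw [Finset.prod_ne_zero_iff]
      intro j hj
      have hxs : x ≠ s j := fun h =>
        hxn (by simp only [Finset.coe_image, Set.mem_image]; exact ⟨j, by simpa using hj, h.symm⟩)
      exact pow_ne_zero _ (sub_ne_zero_of_ne hxs)
    exact mul_ne_zero h1 h2
  calc (0:ENNReal) < volume (Set.Ioo (-1:ℝ) 1 \ (↑(T.image s) : Set ℝ)) := by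
        rw [measure_diff_null ((T.image s).finite_toSet.measure_zero _)]
        simp [Real.volume_Ioo]
      _ ≤ _ := measure_mono hsub

private lemma exists_min17 {m : ℕ} (T : Finset (Fin m)) :
    ∃ δ₁ : ℝ, 0 < δ₁ ∧ ∀ s : Fin m → ℝ, (∀ j, s j ∈ Set.Icc (-1:ℝ) 1) →
      δ₁ ≤ ∫ x in Set.Ioo (-1:ℝ) 1, (1 - x^2) * ∏ j ∈ T, (x - s j)^2 := by
  have hcpt : IsCompact (Set.Icc (fun _ => (-1:ℝ) : Fin m → ℝ) (fun _ => 1)) := isCompact_Icc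
  have hne : (Set.Icc (fun _ => (-1:ℝ) : Fin m → ℝ) (fun _ => 1)).Nonempty :=
    ⟨fun _ => 0, by constructor <;> intro i <;> norm_num⟩
  obtain ⟨sm, hsm, hmin⟩ := hcpt.exists_isMinOn hne (contF17 T).continuousOn
  refine ⟨_, posF17 T sm, fun s hs => hmin ?_⟩
  constructor <;> intro i
  · exact (hs i).1
  · exact (hs i).2

end Stmt17Aux

/-- A (right-sided) `w`-Gauß–Radau quadrature of order `q`, with pairwise distinct nodes
`-1 < r₀ < ⋯ < r_q = 1`, exact for polynomials of degree at most `2q`. -/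
def IsGaussRadauQuad (q : ℕ) (w : ℝ → ℝ) (ω r : Fin (q + 1) → ℝ) : Prop :=
  (∀ j, r j ∈ Set.Ioc (-1 : ℝ) 1) ∧ StrictMono r ∧ r (Fin.last q) = 1 ∧
    ∀ p : Polynomial ℝ, p.natDegree ≤ 2 * q →
      ∫ x in Set.Ioo (-1 : ℝ) 1, p.eval x * w x = ∑ j, ω j * p.eval (r j)

section NodeBound

open Polynomial

private lemma node_bound17 {q : ℕ} {w : ℝ → ℝ} {mw Mw : ℝ} (hmw : 0 < mw) (hMw : 0 < Mw)
    (hw : ∀ x ∈ Set.Ioo (-1:ℝ) 1, w x ∈ Set.Icc mw Mw) (hwc : Continuous w)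
    {ω s : Fin (q+1) → ℝ} (hGR : IsGaussRadauQuad q w ω s)
    {δ₁ : ℝ}
    (hmin : ∀ t : Fin (q+1) → ℝ, (∀ j, t j ∈ Set.Icc (-1:ℝ) 1) →
      δ₁ ≤ ∫ x in Set.Ioo (-1:ℝ) 1,
        (1 - x^2) * ∏ j ∈ Finset.univ \ {0, Fin.last q}, (x - t j)^2) :
    ∀ j, min 1 (mw * δ₁ / (Mw * (4 * 4^(q+1)))) ≤ 1 + s j := by
  obtain ⟨hIoc, hmono, hlast, hexact⟩ := hGR
  have h0le : ∀ j, s 0 ≤ s j := fun j => hmono.le_iff_le.mpr (Fin.zero_le j)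
  suffices h : min 1 (mw * δ₁ / (Mw * (4 * 4^(q+1)))) ≤ 1 + s 0 by
    intro j; exact h.trans (by linarith [h0le j])
  rcases Nat.eq_zero_or_pos q with hq | hq
  · subst hq
    have : s 0 = 1 := by rw [← hlast]; rfl
    rw [this]
    calc min 1 (mw * δ₁ / (Mw * (4 * 4^(0+1)))) ≤ 1 := min_le_left _ _
      _ ≤ 1 + 1 := by norm_num
  set T : Finset (Fin (q+1)) := Finset.univ \ {0, Fin.last q} with hT
  set G : ℝ → ℝ := fun x => (∏ j ∈ T, (x - s j))^2 with hG
  have hGcont : Continuous G := (continuous_finset_prod T fun j _ =>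
    continuous_id.sub continuous_const).pow 2
  have hGnn : ∀ x, 0 ≤ G x := fun x => sq_nonneg _
  set P : Polynomial ℝ := (X - C (s 0)) * (C 1 - X) * (∏ j ∈ T, (X - C (s j)))^2 with hP
  have hPdeg : P.natDegree ≤ 2 * q := by
    have hcard : T.card = q - 1 := by
      rw [hT, Finset.card_sdiff_of_subset (by simp)]
      rw [Finset.card_insert_of_notMem (by simp [Fin.ext_iff]; omega)]
      simp
    calc P.natDegree ≤ ((X - C (s 0)) * (C 1 - X)).natDegree
          + ((∏ j ∈ T, (X - C (s j)))^2).natDegree := natDegree_mul_le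
      _ ≤ 2 + 2 * (q - 1) := by
          gcongr
          · calc (((X : Polynomial ℝ) - C (s 0)) * (C 1 - X)).natDegree
                ≤ ((X : Polynomial ℝ) - C (s 0)).natDegree
                  + ((C 1 - X : Polynomial ℝ)).natDegree := natDegree_mul_le
              _ ≤ 2 := by
                  rw [natDegree_X_sub_C]
                  have h9 : ((C 1 - X : Polynomial ℝ)).natDegree ≤ 1 :=
                    le_trans (natDegree_sub_le _ _) (by simp)
                  omega
          · calc ((∏ j ∈ T, (X - C (s j)))^2).natDegree
                = 2 * (∏ j ∈ T, (X - C (s j))).natDegree := by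
                  rw [natDegree_pow]
              _ ≤ 2 * (q - 1) := by
                  gcongr
                  calc (∏ j ∈ T, (X - C (s j))).natDegree
                      ≤ ∑ j ∈ T, (X - C (s j)).natDegree := natDegree_prod_le _ _
                    _ = T.card := by simp
                    _ = q - 1 := hcard
      _ ≤ 2 * q := by omega
  have hPeval : ∀ x : ℝ, P.eval x = (x - s 0) * (1 - x) * G x := by
    intro x; simp [hP, hG, eval_prod]
  have hPzero : ∀ j, P.eval (s j) = 0 := by
    intro j
    rcases eq_or_ne j 0 with rfl | hj0
    · simp [hPeval]
    rcases eq_or_ne j (Fin.last q) with rfl | hjl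
    · rw [hPeval, hlast]; ring
    have hjT : j ∈ T := by simp [hT, hj0, hjl]
    have hGz : G (s j) = 0 := by
      simp only [hG]
      have hz : (∏ i ∈ T, (s j - s i)) = 0 := Finset.prod_eq_zero hjT (sub_self (s j))
      rw [hz]; norm_num
    rw [hPeval, hGz]; ring
  have hkey : ∫ x in Set.Ioo (-1:ℝ) 1, (x - s 0) * ((1 - x) * (G x * w x)) = 0 := by
    have := hexact P hPdeg
    rw [Finset.sum_eq_zero (fun j _ => by rw [hPzero j, mul_zero])] at this
    rw [← this]
    apply setIntegral_congr_fun measurableSet_Ioo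
    intro x _
    show (x - s 0) * ((1 - x) * (G x * w x)) = P.eval x * w x
    rw [hPeval]; ring
  set B := ∫ x in Set.Ioo (-1:ℝ) 1, (1 - x) * (G x * w x) with hB
  set A := ∫ x in Set.Ioo (-1:ℝ) 1, (x + 1) * ((1 - x) * (G x * w x)) with hA
  have hints : IntegrableOn (fun x => (1 - x) * (G x * w x)) (Set.Ioo (-1:ℝ) 1) :=
    intOn17 ((continuous_const.sub continuous_id).mul (hGcont.mul hwc))
  have hintA : IntegrableOn (fun x => (x + 1) * ((1 - x) * (G x * w x))) (Set.Ioo (-1:ℝ) 1) :=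
    intOn17 ((continuous_id.add continuous_const).mul
      ((continuous_const.sub continuous_id).mul (hGcont.mul hwc)))
  have hAB : A = (1 + s 0) * B := by
    have hsub : A - (1 + s 0) * B
        = ∫ x in Set.Ioo (-1:ℝ) 1, (x - s 0) * ((1 - x) * (G x * w x)) := by
      rw [hA, hB, ← integral_const_mul, ← integral_sub hintA (hints.const_mul _)]
      apply setIntegral_congr_fun measurableSet_Ioo
      intro x _
      show (x + 1) * ((1 - x) * (G x * w x)) - (1 + s 0) * ((1 - x) * (G x * w x))
        = (x - s 0) * ((1 - x) * (G x * w x))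
      ring
    rw [hkey] at hsub
    linarith
  have hsIcc : ∀ j, s j ∈ Set.Icc (-1:ℝ) 1 := fun j => ⟨le_of_lt (hIoc j).1, (hIoc j).2⟩
  have hGeq : ∀ x : ℝ, G x = ∏ j ∈ T, (x - s j)^2 := fun x => by
    simp only [hG]; rw [Finset.prod_pow]
  have hA_ge : mw * δ₁ ≤ A := by
    calc mw * δ₁ ≤ mw * ∫ x in Set.Ioo (-1:ℝ) 1, (1 - x^2) * ∏ j ∈ T, (x - s j)^2 :=
          mul_le_mul_of_nonneg_left (hmin s hsIcc) hmw.le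
      _ = ∫ x in Set.Ioo (-1:ℝ) 1, mw * ((1 - x^2) * ∏ j ∈ T, (x - s j)^2) :=
          (integral_const_mul _ _).symm
      _ ≤ A := by
          apply setIntegral_mono_on
            (intOn17 (by
              exact continuous_const.mul ((continuous_const.sub ((continuous_id.pow 2))).mul
                (continuous_finset_prod T fun j _ => (continuous_id.sub continuous_const).pow 2))))
            hintA measurableSet_Ioo
          intro x hx
          have h1 : (0:ℝ) ≤ 1 - x^2 := by nlinarith [hx.1, hx.2]
          have h2 : (0:ℝ) ≤ ∏ j ∈ T, (x - s j)^2 := Finset.prod_nonneg fun j _ => sq_nonneg _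
          have hwx := hw x hx
          have key : mw * ((1 - x^2) * ∏ j ∈ T, (x - s j)^2)
              ≤ w x * ((1 - x^2) * ∏ j ∈ T, (x - s j)^2) :=
            mul_le_mul_of_nonneg_right hwx.1 (mul_nonneg h1 h2)
          calc mw * ((1 - x^2) * ∏ j ∈ T, (x - s j)^2)
              ≤ w x * ((1 - x^2) * ∏ j ∈ T, (x - s j)^2) := key
            _ = (x + 1) * ((1 - x) * (G x * w x)) := by rw [hGeq x]; ring
  have hB_le : B ≤ Mw * (4 * 4^(q+1)) := by
    have hstep : B ≤ ∫ _x in Set.Ioo (-1:ℝ) 1, (2 * 4^(q+1) * Mw : ℝ) := by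
      apply setIntegral_mono_on hints (intOn17 continuous_const) measurableSet_Ioo
      intro x hx
      have hwx := hw x hx
      have hwnn : (0:ℝ) ≤ w x := le_trans hmw.le hwx.1
      have hG4 : G x ≤ 4^(q+1) := by
        rw [hGeq]
        calc ∏ j ∈ T, (x - s j)^2 ≤ ∏ _j ∈ T, (4:ℝ) := by
              apply Finset.prod_le_prod (fun j _ => sq_nonneg _)
              intro j _
              have h1 := (hsIcc j).1; have h2 := (hsIcc j).2
              nlinarith [hx.1, hx.2]
          _ = 4 ^ T.card := by rw [Finset.prod_const]
          _ ≤ 4 ^ (q+1) := by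
              apply pow_le_pow_right₀ (by norm_num)
              exact le_trans (Finset.card_le_univ T) (by simp)
      have t1 : G x * w x ≤ 4^(q+1) * Mw :=
        mul_le_mul hG4 hwx.2 hwnn (by positivity)
      have t2 : (1 - x) * (G x * w x) ≤ 2 * (4^(q+1) * Mw) := by
        apply mul_le_mul (by linarith [hx.1]) t1 (mul_nonneg (hGnn x) hwnn) (by norm_num)
      calc (1 - x) * (G x * w x) ≤ 2 * (4^(q+1) * Mw) := t2
        _ = 2 * 4^(q+1) * Mw := by ring
    rw [int_const17] at hstep
    calc B ≤ 2 * (2 * 4^(q+1) * Mw) := hstep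
      _ = Mw * (4 * 4^(q+1)) := by ring
  have h1s0 : 0 < 1 + s 0 := by linarith [(hIoc 0).1]
  have hfin : mw * δ₁ ≤ (1 + s 0) * (Mw * (4 * 4^(q+1))) := by
    calc mw * δ₁ ≤ A := hA_ge
      _ = (1 + s 0) * B := hAB
      _ ≤ (1 + s 0) * (Mw * (4 * 4^(q+1))) := mul_le_mul_of_nonneg_left hB_le h1s0.le
  have hpos : (0:ℝ) < Mw * (4 * 4^(q+1)) := by positivity
  exact le_trans (min_le_right _ _) ((div_le_iff₀ hpos).mpr hfin)

end NodeBound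

/-- Corollary `c:chi1`: with `w_τ(x) = exp(-ρτ(x+1))` and `χ_τ` the polynomial of degree
`≤ q+1` vanishing at all Gauß–Radau nodes of `w_τ` and with `χ_τ(-1) = 1`, the integrals
`∫_{-1}^1 χ_τ² w_τ` are bounded uniformly for `τ` in a compact set `K`. -/
theorem stmt_17 (ρ : ℝ) (hρ : 0 < ρ) (q : ℕ)
    (ω r : ℝ → Fin (q + 1) → ℝ)
    (hGR : ∀ τ : ℝ,
      IsGaussRadauQuad q (fun x => Real.exp (-ρ * τ * (x + 1))) (ω τ) (r τ))
    (χ : ℝ → Polynomial ℝ)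
    (hχdeg : ∀ τ, (χ τ).natDegree ≤ q + 1)
    (hχ0 : ∀ τ, ∀ j, (χ τ).eval (r τ j) = 0)
    (hχ1 : ∀ τ, (χ τ).eval (-1) = 1)
    (K : Set ℝ) (hK : IsCompact K) :
    ∃ C : ℝ, ∀ τ ∈ K,
      ∫ x in Set.Ioo (-1 : ℝ) 1, ((χ τ).eval x) ^ 2 * Real.exp (-ρ * τ * (x + 1)) ≤ C := by
  rcases Set.eq_empty_or_nonempty K with rfl | ⟨τ₀, hτ₀⟩
  · exact ⟨0, by simp⟩
  obtain ⟨M, hM⟩ := hK.isBounded.subset_closedBall 0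
  have hτM : ∀ τ ∈ K, |τ| ≤ M := by
    intro τ hτ
    have := hM hτ
    simpa [Metric.mem_closedBall, Real.dist_eq] using this
  set mw : ℝ := Real.exp (-(2*ρ*M)) with hmwdef
  set Mw : ℝ := Real.exp (2*ρ*M) with hMwdef
  have hmw : 0 < mw := Real.exp_pos _
  have hMw : 0 < Mw := Real.exp_pos _
  have hwK : ∀ τ ∈ K, ∀ x ∈ Set.Ioo (-1:ℝ) 1,
      Real.exp (-ρ * τ * (x + 1)) ∈ Set.Icc mw Mw := by
    intro τ hτ x hx
    have hx1 : (0:ℝ) < x + 1 := by linarith [hx.1]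
    have hM0 : (0:ℝ) ≤ M := (abs_nonneg τ).trans (hτM τ hτ)
    have habs : |(-ρ) * τ * (x+1)| ≤ 2*ρ*M := by
      rw [abs_mul, abs_mul, abs_neg, abs_of_pos hρ, abs_of_pos hx1]
      calc ρ * |τ| * (x+1) ≤ ρ * M * 2 := by
            apply mul_le_mul (mul_le_mul_of_nonneg_left (hτM τ hτ) hρ.le) (by linarith [hx.2])
              (by linarith) (mul_nonneg hρ.le hM0)
        _ = 2*ρ*M := by ring
    obtain ⟨h1, h2⟩ := abs_le.mp habs
    exact ⟨Real.exp_le_exp.mpr (by linarith), Real.exp_le_exp.mpr (by linarith)⟩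
  obtain ⟨δ₁, hδ₁, hmin⟩ := exists_min17 (Finset.univ \ {0, Fin.last q} : Finset (Fin (q+1)))
  set δ : ℝ := min 1 (mw * δ₁ / (Mw * (4 * 4^(q+1)))) with hδdef
  have hδ : 0 < δ := lt_min one_pos (by positivity)
  refine ⟨2 * (4^(q+1) / δ^(2*(q+1)) * Mw), fun τ hτ => ?_⟩
  obtain ⟨hIoc, hmono, hlast, hexact⟩ := hGR τ
  have hwc : Continuous fun x : ℝ => Real.exp (-ρ * τ * (x + 1)) :=
    Real.continuous_exp.comp (continuous_const.mul (continuous_id.add continuous_const))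
  have hnode : ∀ j, δ ≤ 1 + r τ j :=
    node_bound17 hmw hMw (hwK τ hτ) hwc (hGR τ) hmin
  -- pointwise bound on χ²
  have hχbd : ∀ x ∈ Set.Ioo (-1:ℝ) 1, ((χ τ).eval x)^2 ≤ 4^(q+1) / δ^(2*(q+1)) := by
    intro x hx
    have heq := chi_eq17 hmono.injective (hχdeg τ) (hχ0 τ) (hχ1 τ) x
    have hD : δ^(2*(q+1)) ≤ ∏ j, (-1 - r τ j)^2 := by
      calc δ^(2*(q+1)) = (δ^2)^(q+1) := by rw [← pow_mul]
        _ = ∏ _j : Fin (q+1), δ^2 := by rw [Finset.prod_const]; simp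
        _ ≤ ∏ j, (-1 - r τ j)^2 := by
            apply Finset.prod_le_prod (fun j _ => sq_nonneg _)
            intro j _
            have h1 : (-1 - r τ j)^2 = (1 + r τ j)^2 := by ring
            rw [h1]
            exact pow_le_pow_left₀ hδ.le (hnode j) 2
    have hPr : (∏ j, (x - r τ j)^2) ≤ 4^(q+1) := by
      calc ∏ j, (x - r τ j)^2 ≤ ∏ _j : Fin (q+1), (4:ℝ) := by
            apply Finset.prod_le_prod (fun j _ => sq_nonneg _)
            intro j _
            have h1 := (hIoc j).1; have h2 := (hIoc j).2
            nlinarith [hx.1, hx.2]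
        _ = 4^(q+1) := by rw [Finset.prod_const]; simp
    have hE : (0:ℝ) ≤ ((χ τ).eval x)^2 := sq_nonneg _
    rw [le_div_iff₀ (by positivity)]
    calc ((χ τ).eval x)^2 * δ^(2*(q+1)) ≤ ((χ τ).eval x)^2 * ∏ j, (-1 - r τ j)^2 :=
          mul_le_mul_of_nonneg_left hD hE
      _ = ∏ j, (x - r τ j)^2 := heq
      _ ≤ 4^(q+1) := hPr
  -- integrate
  have hstep : ∫ x in Set.Ioo (-1:ℝ) 1, ((χ τ).eval x)^2 * Real.exp (-ρ * τ * (x + 1))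
      ≤ ∫ _x in Set.Ioo (-1:ℝ) 1, (4^(q+1) / δ^(2*(q+1)) * Mw : ℝ) := by
    apply setIntegral_mono_on
      (intOn17 (((χ τ).continuous_aeval.pow 2).mul hwc))
      (intOn17 continuous_const) measurableSet_Ioo
    intro x hx
    have hwx := hwK τ hτ x hx
    have hwnn : (0:ℝ) ≤ Real.exp (-ρ * τ * (x + 1)) := (Real.exp_pos _).le
    exact mul_le_mul (hχbd x hx) hwx.2 hwnn (by positivity)
  rw [int_const17] at hstep
  exact hstep
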